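/- Let Ω be an algebraically closed field, M a separably closed subfield of Ω, and A a subfield of M such that the field extension M/A is separable. Then the set of elements of Ω that are separably algebraic over A coincides with the relative algebraic closure of A in M; that is, {x ∈ Ω : x is algebraic and separable over A} = {x ∈ M : x is algebraic over A}. In particular, the relative algebraic closure of A in M is a separable closure of A. -/

import Mathlib

/-!
STATEMENT 0 (Remark 1.9): Let `Ω` be an algebraically closed field, `M` a separably
closed subfield of `Ω`, and `A ⊆ M` a subfield such that `M/A` is separable. Then
`{x ∈ Ω | x is algebraic and separable over A} = {x ∈ M | x is algebraic over A}`.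
-/

/-- `v` is linearly independent over the subset `S` of `Ω`. -/
def LinIndepOver (Ω : Type*) [Field Ω] (S : Set Ω) {n : ℕ} (v : Fin n → Ω) : Prop :=
  ∀ c : Fin n → Ω, (∀ i, c i ∈ S) → (∑ i, c i * v i) = 0 → ∀ i, c i = 0

/-- `F` is linearly disjoint from `L` over `K` (all subsets of the ambient field `Ω`):
every finite tuple from `F` that is linearly independent over `K` remains linearly
independent over `L`. -/
def LinDisjOver (Ω : Type*) [Field Ω] (K F L : Set Ω) : Prop :=
  ∀ (n : ℕ) (v : Fin n → Ω), (∀ i, v i ∈ F) →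
    LinIndepOver Ω K v → LinIndepOver Ω L v

/-- The field extension `L/K` (subfields of `Ω`, as subsets) is separable: either the
characteristic is `0` (so the condition below is vacuous), or the characteristic is a
prime `p` and `K` is linearly disjoint from `L^p` over `K^p`. -/
def SepExtOn (Ω : Type*) [Field Ω] (K L : Set Ω) : Prop :=
  ∀ p : ℕ, p.Prime → CharP Ω p →
    LinDisjOver Ω ((· ^ p) '' K) K ((· ^ p) '' L)

open Polynomial

/-- Linear disjointness is symmetric (when `K ≤ L` are subfields). -/
lemma linDisj_symm {Ω : Type*} [Field Ω] (K L : Subfield Ω) (F : Set Ω)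
    (hKL : K ≤ L) (H : LinDisjOver Ω (K : Set Ω) F (L : Set Ω)) :
    LinDisjOver Ω (K : Set Ω) (L : Set Ω) F := by
  intro n
  induction n with
  | zero => exact fun w _ _ c _ _ i => i.elim0
  | succ n ih =>
    intro w hw hwK c hc hsum
    by_cases hcK : LinIndepOver Ω (K : Set Ω) c
    · have hwz : ∀ i, w i = 0 := by
        refine H _ c hc hcK w hw ?_
        rw [← hsum]
        exact Finset.sum_congr rfl fun i _ => mul_comm _ _
      intro i
      exfalso
      have h1 := hwK (fun j => if j = i then 1 else 0)
        (fun j => by by_cases h : j = i <;> simp [h, K.one_mem, K.zero_mem])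
        (by simp [hwz]) i
      simp at h1
    · rw [LinIndepOver] at hcK
      push_neg at hcK
      obtain ⟨k, hkK, hksum, i0, hki0⟩ := hcK
      set w' : Fin n → Ω :=
        fun j => w (i0.succAbove j) - k (i0.succAbove j) / k i0 * w i0 with hw'def
      set c' : Fin n → Ω := fun j => c (i0.succAbove j) with hc'def
      have hw' : ∀ j, w' j ∈ L := fun j =>
        L.sub_mem (hw _) (L.mul_mem (L.div_mem (hKL (hkK _)) (hKL (hkK i0))) (hw i0))
      have hw'K : LinIndepOver Ω (K : Set Ω) w' := by
        intro κ hκ hκsum j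
        set κ' : Fin (n+1) → Ω :=
          i0.insertNth (-(∑ j, κ j * (k (i0.succAbove j) / k i0))) κ with hκ'def
        have hκ'K : ∀ i, κ' i ∈ (K : Set Ω) := by
          intro i
          refine Fin.succAboveCases i0 ?_ ?_ i
          · simpa [hκ'def] using K.neg_mem (K.sum_mem fun j _ =>
              K.mul_mem (hκ j) (K.div_mem (hkK _) (hkK i0)))
          · intro j
            simpa [hκ'def] using hκ j
        have hκ'sum : ∑ i, κ' i * w i = 0 := by
          rw [Fin.sum_univ_succAbove _ i0]
          simp only [hκ'def, Fin.insertNth_apply_same, Fin.insertNth_apply_succAbove]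
          rw [← hκsum]
          rw [neg_mul, Finset.sum_mul, neg_add_eq_iff_eq_add]
          rw [← Finset.sum_add_distrib]
          refine Finset.sum_congr rfl fun j _ => ?_
          simp only [hw'def]
          ring
        have h2 := hwK κ' hκ'K hκ'sum (i0.succAbove j)
        simpa [hκ'def] using h2
      have hsum' : ∑ j, c' j * w' j = 0 := by
        have e1 : ∑ j : Fin n, c' j * w (i0.succAbove j) = -(c i0 * w i0) := by
          have h3 := hsum
          rw [Fin.sum_univ_succAbove _ i0] at h3
          linear_combination h3
        have e2 : ∑ j : Fin n, c' j * k (i0.succAbove j) = -(k i0 * c i0) := by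
          have h3 := hksum
          rw [Fin.sum_univ_succAbove _ i0] at h3
          have flip : ∑ j : Fin n, c' j * k (i0.succAbove j)
              = ∑ j : Fin n, k (i0.succAbove j) * c (i0.succAbove j) :=
            Finset.sum_congr rfl fun j _ => mul_comm _ _
          rw [flip]
          linear_combination h3
        calc ∑ j, c' j * w' j
            = ∑ j, (c' j * w (i0.succAbove j) -
                c' j * k (i0.succAbove j) * (w i0 / k i0)) := by
              refine Finset.sum_congr rfl fun j _ => ?_
              simp only [hw'def]; ring
          _ = (∑ j, c' j * w (i0.succAbove j)) -
                (∑ j, c' j * k (i0.succAbove j)) * (w i0 / k i0) := by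
              rw [Finset.sum_sub_distrib, Finset.sum_mul]
          _ = 0 := by rw [e1, e2]; field_simp; ring
      have hz := ih w' hw' hw'K c' (fun j => hc _) hsum'
      have hci0 : c i0 = 0 := by
        have h3 := hksum
        rw [Fin.sum_univ_succAbove _ i0] at h3
        have h5 : k i0 * c i0 = 0 := by
          simp only [hc'def] at hz
          simp [hz] at h3
          simpa using h3
        exact (mul_eq_zero.1 h5).resolve_left hki0
      intro i
      exact Fin.succAboveCases i0 hci0 (fun j => hz j) i

/-- Powers of `x` below the degree of its minimal polynomial are independent over `A`. -/
lemma pow_indep {Ω : Type*} [Field Ω] (A : Subfield Ω) (x : Ω)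
    {m : ℕ} (hm : m ≤ (minpoly ↥A x).natDegree) (c : Fin m → Ω)
    (hc : ∀ j, c j ∈ A) (hsum : ∑ j, c j * x ^ (j : ℕ) = 0) : ∀ j, c j = 0 := by
  set n := (minpoly ↥A x).natDegree with hn
  have hli := Fintype.linearIndependent_iff.1 (linearIndependent_pow (K := ↥A) (S := Ω) x)
  set f : ℕ → Ω := fun i => if h : i < m then c ⟨i, h⟩ * x ^ i else 0 with hfdef
  set g : Fin n → ↥A := fun i => if h : (i : ℕ) < m then ⟨c ⟨(i : ℕ), h⟩, hc _⟩ else 0 with hgdef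
  have hgs : ∀ i, g i = 0 := by
    apply hli
    have h1 : ∑ i : Fin n, g i • x ^ (i : ℕ) = ∑ i : Fin n, f (i : ℕ) := by
      refine Finset.sum_congr rfl fun i _ => ?_
      by_cases h : (i : ℕ) < m <;>
        simp [hgdef, hfdef, h, Subfield.smul_def, smul_eq_mul]
    have h2 : ∑ i : Fin m, f (i : ℕ) = ∑ j : Fin m, c j * x ^ (j : ℕ) := by
      refine Finset.sum_congr rfl fun j _ => ?_
      simp [hfdef, j.isLt]
    rw [h1, Fin.sum_univ_eq_sum_range f n, ← Finset.sum_subset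
      (Finset.range_subset_range.2 hm) (fun i _ hi => ?_), ← Fin.sum_univ_eq_sum_range f m, h2, hsum]
    simp only [hfdef]
    rw [dif_neg (by simpa using hi)]
  intro j
  have h3 := hgs ⟨(j : ℕ), lt_of_lt_of_le j.isLt hm⟩
  simp only [hgdef, dif_pos j.isLt] at h3
  have := congrArg (Subtype.val) h3
  simpa using this

/-- In characteristic `p`, an element of `M` algebraic over `A` is separable over `A`,
given that `M/A` is separable. -/
lemma sep_of_mem_char {Ω : Type*} [Field Ω] (M A : Subfield Ω) (hAM : A ≤ M)
    {p : ℕ} (hp : p.Prime) (hchar : CharP Ω p)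
    (H0 : LinDisjOver Ω ((· ^ p) '' (A : Set Ω)) (A : Set Ω) ((· ^ p) '' (M : Set Ω)))
    {x : Ω} (hxM : x ∈ M) (halg : IsAlgebraic ↥A x) : IsSeparable ↥A x := by
  haveI : Fact p.Prime := ⟨hp⟩
  haveI : ExpChar Ω p := ExpChar.prime hp
  have hxint : IsIntegral ↥A x := halg.isIntegral
  haveI : CharP ↥A p := A.subtype.charP A.subtype.injective p
  set Ap : Subfield Ω := A.map (frobenius Ω p) with hApdef
  set Mp : Subfield Ω := M.map (frobenius Ω p) with hMpdef
  have himA : ((· ^ p) '' (A : Set Ω)) = (Ap : Set Ω) := by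
    rw [hApdef, Subfield.coe_map]
    rfl
  have himM : ((· ^ p) '' (M : Set Ω)) = (Mp : Set Ω) := by
    rw [hMpdef, Subfield.coe_map]
    rfl
  rw [himA, himM] at H0
  have hApMp : Ap ≤ Mp := by
    intro y hy
    rcases Subfield.mem_map.1 hy with ⟨z, hz, rfl⟩
    exact Subfield.mem_map.2 ⟨z, hAM hz, rfl⟩
  have Hsym := linDisj_symm Ap Mp (A : Set Ω) hApMp H0
  by_contra hns
  have hns' : ¬ (minpoly ↥A x).Separable := hns
  have hirr := minpoly.irreducible hxint
  have hder : derivative (minpoly ↥A x) = 0 := by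
    by_contra h
    exact hns' ((separable_iff_derivative_ne_zero hirr).2 h)
  set g : Polynomial ↥A := Polynomial.contract p (minpoly ↥A x) with hgdef
  have hfe : Polynomial.expand ↥A p g = minpoly ↥A x :=
    Polynomial.expand_contract p hder hp.ne_zero
  set n := (minpoly ↥A x).natDegree with hn
  set e := g.natDegree with he
  have hne : n = e * p := by
    rw [hn, ← hfe, Polynomial.natDegree_expand]
  have hg0 : g ≠ 0 := by
    intro h
    have : minpoly ↥A x = 0 := by rw [← hfe, h, map_zero]
    exact minpoly.ne_zero hxint this
  have hnpos : 0 < n := minpoly.natDegree_pos hxint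
  have hepos : 0 < e := by
    rcases Nat.eq_zero_or_pos e with h | h
    · rw [h, zero_mul] at hne; omega
    · exact h
  have hep : e + 1 ≤ n := by
    have := hp.two_le
    calc e + 1 ≤ e + e := by omega
      _ = e * 2 := by ring
      _ ≤ e * p := Nat.mul_le_mul_left e this
      _ = n := hne.symm
  -- the tuple of p-th powers
  set w : Fin (e + 1) → Ω := fun j => (x ^ (j : ℕ)) ^ p with hwdef
  have hwMp : ∀ j, w j ∈ (Mp : Set Ω) := by
    intro j
    exact Subfield.mem_map.2 ⟨x ^ (j : ℕ), M.pow_mem hxM _, rfl⟩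
  have hwAp : LinIndepOver Ω (Ap : Set Ω) w := by
    intro c hc hsum j
    have hd : ∀ i, ∃ d, d ∈ A ∧ d ^ p = c i := by
      intro i
      rcases Subfield.mem_map.1 (hc i) with ⟨d, hdA, hdf⟩
      exact ⟨d, hdA, hdf⟩
    choose d hdA hdp using hd
    have hds : (∑ i, d i * x ^ (i : ℕ)) ^ p = 0 := by
      rw [sum_pow_char]
      rw [← hsum]
      refine Finset.sum_congr rfl fun i _ => ?_
      rw [mul_pow, hdp, hwdef]
    have hds0 : ∑ i, d i * x ^ (i : ℕ) = 0 :=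
      pow_eq_zero_iff hp.ne_zero |>.1 hds
    have := pow_indep A x (le_trans hep (le_of_eq hn.symm)) d hdA hds0 j
    rw [← hdp j, this, zero_pow hp.ne_zero]
  have hwA : LinIndepOver Ω (A : Set Ω) w := Hsym (e + 1) w hwMp hwAp
  -- the dependence relation coming from the minimal polynomial
  have hav : (Polynomial.aeval (x ^ p)) g = 0 := by
    rw [← Polynomial.expand_aeval p g x, hfe, minpoly.aeval]
  have hrel : ∑ j : Fin (e + 1), ((g.coeff (j : ℕ) : Ω)) * w j = 0 := by
    have h4 := Polynomial.aeval_eq_sum_range (R := ↥A) (S := Ω) (p := g) (x ^ p)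
    rw [hav] at h4
    rw [← he] at h4
    set F : ℕ → Ω := fun i => (g.coeff i : Ω) * (x ^ p) ^ i with hFdef
    have h5 : ∑ i ∈ Finset.range (e + 1), g.coeff i • (x ^ p) ^ i
        = ∑ i ∈ Finset.range (e + 1), F i := by
      refine Finset.sum_congr rfl fun i _ => ?_
      simp [hFdef, Subfield.smul_def, smul_eq_mul]
    rw [h5, ← Fin.sum_univ_eq_sum_range F (e + 1)] at h4
    have h6 : ∑ j : Fin (e + 1), ((g.coeff (j : ℕ) : Ω)) * w j
        = ∑ j : Fin (e + 1), F (j : ℕ) := by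
      refine Finset.sum_congr rfl fun j _ => ?_
      simp only [hFdef, hwdef]
      rw [pow_right_comm]
    rw [h6, ← h4]
  have hz := hwA (fun j => (g.coeff (j : ℕ) : Ω))
    (fun j => (g.coeff (j : ℕ)).2) hrel (Fin.last e)
  have hlead : g.coeff e = 0 := by
    have := congrArg id hz
    exact_mod_cast hz
  exact Polynomial.leadingCoeff_ne_zero.2 hg0 hlead

theorem separable_algebraic_elements_eq_relative_algebraic_closure
    (Ω : Type*) [Field Ω] [IsAlgClosed Ω]
    (M A : Subfield Ω) (hAM : A ≤ M)
    (hMscl : IsSepClosed ↥M)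
    (hsep : SepExtOn Ω (A : Set Ω) (M : Set Ω)) :
    {x : Ω | IsAlgebraic ↥A x ∧ IsSeparable ↥A x} =
      {x : Ω | x ∈ M ∧ IsAlgebraic ↥A x} ∧
    -- in particular, the relative algebraic closure of `A` in `M` is a separable closure
    -- of `A`: every element of it is separable algebraic over `A` (by the above equality)
    -- and, as a field, it is separably closed
    IsSepClosed ↥(Subfield.closure {x : Ω | x ∈ M ∧ IsAlgebraic ↥A x}) := by
  have part1 : {x : Ω | IsAlgebraic ↥A x ∧ IsSeparable ↥A x} =
      {x : Ω | x ∈ M ∧ IsAlgebraic ↥A x} := by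
    ext x
    simp only [Set.mem_setOf_eq]
    constructor
    · rintro ⟨halg, hs⟩
      refine ⟨?_, halg⟩
      -- separable algebraic over A implies in M, since M is separably closed
      have hxint : IsIntegral ↥A x := halg.isIntegral
      have hsf : (minpoly ↥A x).Separable := hs
      set ι : ↥A →+* ↥M := Subfield.inclusion hAM with hι
      have hsplit : ((minpoly ↥A x).map ι).Splits :=
        IsSepClosed.splits_of_separable _ (hsf.map)
      have hcomp : M.subtype.comp ι = algebraMap ↥A Ω := by
        ext a
        rfl
      have hne : (minpoly ↥A x).map ι ≠ 0 :=
        Polynomial.map_ne_zero (minpoly.ne_zero hxint)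
      have hroot : x ∈ (((minpoly ↥A x).map ι).map M.subtype).roots := by
        rw [Polynomial.mem_roots']
        refine ⟨?_, ?_⟩
        · rw [Polynomial.map_map, hcomp]
          exact Polynomial.map_ne_zero (minpoly.ne_zero hxint)
        · rw [Polynomial.IsRoot, Polynomial.map_map, hcomp, Polynomial.eval_map,
            ← Polynomial.aeval_def, minpoly.aeval]
      rw [hsplit.roots_map _, Multiset.mem_map] at hroot
      obtain ⟨y, _, rfl⟩ := hroot
      exact y.2
    · rintro ⟨hxM, halg⟩
      refine ⟨halg, ?_⟩
      rcases CharP.char_is_prime_or_zero Ω (ringChar Ω) with hp | h0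
      · exact sep_of_mem_char M A hAM hp (ringChar.charP Ω)
          (hsep (ringChar Ω) hp (ringChar.charP Ω)) hxM halg
      · haveI : CharP Ω 0 := h0 ▸ ringChar.charP Ω
        haveI : CharZero Ω := CharP.charP_to_charZero Ω
        haveI : CharZero ↥A := A.subtype.charZero
        exact (minpoly.irreducible halg.isIntegral).separable
  refine ⟨part1, ?_⟩
  rw [← part1]
  have hset : {x : Ω | IsAlgebraic ↥A x ∧ IsSeparable ↥A x} =
      ((separableClosure ↥A Ω).toSubfield : Set Ω) := by
    ext x
    simp only [Set.mem_setOf_eq, SetLike.mem_coe]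
    constructor
    · rintro ⟨-, hs⟩
      exact hs
    · intro hs
      have hs' : IsSeparable ↥A x := hs
      exact ⟨hs'.isIntegral.isAlgebraic, hs'⟩
  rw [hset, Subfield.closure_eq]
  exact (separableClosure.isSepClosure ↥A Ω).sep_closed
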